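/- Let n be a positive integer, let H be a graph with vertices v_1, …, v_k, and for i = 2, …, k let d_i be the number of neighbours of v_i among v_1, …, v_{i−1}. Let G be the blow-up of H with pairwise disjoint parts V_1, …, V_k where |V_1| = 1 and |V_i| = (n−1)·d_i + 1 for i = 2, …, k, and with u ∈ V_i adjacent to w ∈ V_j (i ≠ j) if and only if v_i and v_j are adjacent in H. Then for every 2-coloring of the edges of G in red and blue that contains no blue star with n edges (i.e., no vertex incident to n blue edges whose other endpoints are n distinct vertices), there exist vertices u_1 ∈ V_1, …, u_k ∈ V_k such that the subgraph of G induced on {u_1, …, u_k} is isomorphic to H via u_i ↦ v_i and all of its edges are red. -/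

import Mathlib

open SimpleGraph

def ArrowsInd {V α β : Type*} (F : SimpleGraph V) (H : SimpleGraph α) (G : SimpleGraph β) : Prop :=
  ∀ c : Sym2 V → Bool,
    (∃ f : H ↪g F, ∀ u v, H.Adj u v → c s(f u, f v) = true) ∨
    (∃ g : G ↪g F, ∀ u v, G.Adj u v → c s(g u, g v) = false)

noncomputable def IR {α β : Type*} (H : SimpleGraph α) (G : SimpleGraph β) : ℕ :=
  sInf {N : ℕ | ∃ F : SimpleGraph (Fin N), ArrowsInd F H G}

def StarGraph (n : ℕ) : SimpleGraph (Fin 1 ⊕ Fin n) := completeBipartiteGraph (Fin 1) (Fin n)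

/-- in the blow-up G of H with part sizes |V_1| = 1, |V_i| = (n-1)d_i + 1,
any red/blue coloring with no blue star with n edges contains a red induced copy of H
with the i-th vertex in the i-th part. -/
theorem red_copy_in_blowup (n k : ℕ) (hn : 0 < n)
    (H : SimpleGraph (Fin k)) [DecidableRel H.Adj]
    (d : Fin k → ℕ)
    (hd : ∀ i : Fin k, d i = (Finset.univ.filter (fun j : Fin k => j < i ∧ H.Adj i j)).card)
    (m : Fin k → ℕ)
    (hm : ∀ i : Fin k, m i = if (i : ℕ) = 0 then 1 else (n - 1) * d i + 1)
    (c : Sym2 (Σ i : Fin k, Fin (m i)) → Bool)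
    (hnoblue : ¬ ∃ (v : Σ i : Fin k, Fin (m i)) (S : Finset (Σ i : Fin k, Fin (m i))),
        S.card = n ∧ v ∉ S ∧ ∀ w ∈ S,
          (H.comap (fun x : Σ i : Fin k, Fin (m i) => x.1)).Adj v w ∧ c s(v, w) = false) :
    ∃ u : Fin k → Σ i : Fin k, Fin (m i),
      (∀ i, (u i).1 = i) ∧
      (∀ i j, (H.comap (fun x : Σ i : Fin k, Fin (m i) => x.1)).Adj (u i) (u j) ↔ H.Adj i j) ∧
      (∀ i j, H.Adj i j → c s(u i, u j) = true) := by
  classical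
  have hmpos : ∀ j : Fin k, 0 < m j := by
    intro j; rw [hm]; split <;> omega
  have key : ∀ t : ℕ, t ≤ k → ∃ u : ∀ j : Fin k, Fin (m j),
      ∀ i j : Fin k, (i : ℕ) < t → (j : ℕ) < t → H.Adj i j →
        c s(⟨i, u i⟩, ⟨j, u j⟩) = true := by
    intro t
    induction t with
    | zero => intro _; exact ⟨fun j => ⟨0, hmpos j⟩, fun i j hi => by omega⟩
    | succ t ih =>
      intro ht
      obtain ⟨u, hu⟩ := ih (by omega)
      set it : Fin k := ⟨t, by omega⟩ with hit
      -- count blue edges from each previously chosen vertex into part `it`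
      have hcount : ∀ j : Fin k, j < it → H.Adj it j →
          (Finset.univ.filter (fun x : Fin (m it) =>
            c s((⟨it, x⟩ : Σ i, Fin (m i)), ⟨j, u j⟩) = false)).card ≤ n - 1 := by
        intro j hj hadj
        by_contra hcard
        push_neg at hcard
        have hn' : n ≤ (Finset.univ.filter (fun x : Fin (m it) =>
            c s((⟨it, x⟩ : Σ i, Fin (m i)), ⟨j, u j⟩) = false)).card := by omega
        obtain ⟨T, hT, hTcard⟩ := Finset.exists_subset_card_eq hn'
        apply hnoblue
        refine ⟨⟨j, u j⟩, T.image (fun x => (⟨it, x⟩ : Σ i, Fin (m i))), ?_, ?_, ?_⟩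
        · rw [Finset.card_image_of_injective _ sigma_mk_injective, hTcard]
        · simp only [Finset.mem_image, not_exists]
          rintro x ⟨-, h⟩
          have : j = it := congrArg Sigma.fst h.symm
          exact absurd (this ▸ hj) (lt_irrefl it)
        · rintro w hw
          simp only [Finset.mem_image] at hw
          obtain ⟨x, hx, rfl⟩ := hw
          have hx' := hT hx
          simp only [Finset.mem_filter] at hx'
          constructor
          · exact hadj.symm
          · rw [Sym2.eq_swap]; exact hx'.2
      -- the set of bad choices in part `it`
      set Bad : Finset (Fin (m it)) :=
        (Finset.univ.filter (fun j : Fin k => j < it ∧ H.Adj it j)).biUnion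
          (fun j => Finset.univ.filter (fun x : Fin (m it) =>
            c s((⟨it, x⟩ : Σ i, Fin (m i)), ⟨j, u j⟩) = false)) with hBad
      have hBadcard : Bad.card ≤ (n - 1) * d it := by
        rw [hBad]
        calc _ ≤ ∑ j ∈ Finset.univ.filter (fun j : Fin k => j < it ∧ H.Adj it j),
              (Finset.univ.filter (fun x : Fin (m it) =>
                c s((⟨it, x⟩ : Σ i, Fin (m i)), ⟨j, u j⟩) = false)).card :=
            Finset.card_biUnion_le
          _ ≤ (Finset.univ.filter (fun j : Fin k => j < it ∧ H.Adj it j)).card * (n - 1) := by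
            apply Finset.sum_le_card_nsmul
            intro j hj
            simp only [Finset.mem_filter] at hj
            exact hcount j hj.2.1 hj.2.2
          _ = (n - 1) * d it := by rw [hd it, Nat.mul_comm]
      have hlt : Bad.card < m it := by
        have hmit := hm it
        split_ifs at hmit with h0
        · have hd0 : d it = 0 := by
            rw [hd it]
            refine Finset.card_eq_zero.2 (Finset.filter_eq_empty_iff.2 ?_)
            rintro j -
            rintro ⟨hj, -⟩
            have : (j : ℕ) < (it : ℕ) := hj
            omega
          have hB := hBadcard
          rw [hd0, Nat.mul_zero] at hB
          omega
        · have hB := hBadcard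
          omega
      have : Bad.card < (Finset.univ : Finset (Fin (m it))).card := by
        rwa [Finset.card_univ, Fintype.card_fin]
      have hne : Bad ≠ (Finset.univ : Finset (Fin (m it))) := fun h => by
        rw [h] at this; exact lt_irrefl _ this
      obtain ⟨x, -, hx⟩ := Finset.exists_of_ssubset (Finset.ssubset_univ_iff.2 hne)
      have hxgood : ∀ j : Fin k, j < it → H.Adj it j →
          c s((⟨it, x⟩ : Σ i, Fin (m i)), ⟨j, u j⟩) = true := by
        intro j hj hadj
        rw [hBad] at hx
        simp only [Finset.mem_biUnion, Finset.mem_filter, Finset.mem_univ, true_and,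
          not_exists, not_and] at hx
        have := hx j ⟨hj, hadj⟩
        cases hc : c s((⟨it, x⟩ : Σ i, Fin (m i)), ⟨j, u j⟩) with
        | false => exact absurd hc this
        | true => rfl
      refine ⟨Function.update u it x, ?_⟩
      intro i j hi hj hadj
      have hitval : (it : ℕ) = t := rfl
      by_cases hi' : i = it
      · subst hi'
        by_cases hj' : j = it
        · exact absurd (hj' ▸ hadj) (H.loopless.irrefl it)
        · rw [Function.update_self, Function.update_of_ne hj']
          have hjlt : j < it := by
            have : (j : ℕ) ≠ (it : ℕ) := fun h => hj' (Fin.ext h)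
            exact Fin.lt_def.2 (by omega)
          exact hxgood j hjlt hadj
      · by_cases hj' : j = it
        · subst hj'
          rw [Function.update_self, Function.update_of_ne hi']
          have hilt : i < it := by
            have : (i : ℕ) ≠ (it : ℕ) := fun h => hi' (Fin.ext h)
            exact Fin.lt_def.2 (by omega)
          rw [Sym2.eq_swap]
          exact hxgood i hilt hadj.symm
        · rw [Function.update_of_ne hi', Function.update_of_ne hj']
          have h1 : (i : ℕ) < t := by
            have : (i : ℕ) ≠ (it : ℕ) := fun h => hi' (Fin.ext h)
            omega
          have h2 : (j : ℕ) < t := by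
            have : (j : ℕ) ≠ (it : ℕ) := fun h => hj' (Fin.ext h)
            omega
          exact hu i j h1 h2 hadj
  obtain ⟨u, hu⟩ := key k le_rfl
  refine ⟨fun i => ⟨i, u i⟩, fun i => rfl, ?_, ?_⟩
  · intro i j
    simp [SimpleGraph.comap_adj]
  · intro i j hadj
    exact hu i j i.isLt j.isLt hadj
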